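/- arXiv:2006.02259 — 6 statements merged into one kernel-verified Lean document; each statement's English description precedes it below -/
import Mathlib

section
/- For partitions λ and μ of n, if λ is p-dominated by μ (i.e., there exists a weak p-expansion λ = Σ_{i≥0} p^i γ(i) with each γ(i) an n-tuple of non-negative integers such that the partition obtained by sorting γ(i) in descending order is dominated by μ(i) for all i, where μ = Σ_{i≥0} p^i μ(i) is the base p expansion of μ into p-restricted partitions), then λ is dominated by μ in the dominance order. -/
/-- `f` is a partition of `n`: weakly decreasing, at most `n` parts, parts summing to `n`. -/
def IsPartition (n : ℕ) (f : ℕ → ℕ) : Prop :=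
  Antitone f ∧ (∀ i, n ≤ i → f i = 0) ∧ ∑ i ∈ Finset.range n, f i = n

/-- `Dominates μ l` : `l ⊴ μ` in the dominance order (partial sums of `l` bounded by those of `μ`). -/
def Dominates (μ l : ℕ → ℕ) : Prop :=
  ∀ a : ℕ, ∑ i ∈ Finset.range a, l i ≤ ∑ i ∈ Finset.range a, μ i

/-- `f` is `p`-restricted: consecutive differences are `< p`. -/
def IsRestricted (p : ℕ) (f : ℕ → ℕ) : Prop := ∀ i, f i - f (i + 1) < p

/-- A weak `p`-expansion `f = ∑_{i} p^i ⬝ c i` of a tuple `f` (a partition of `n` has all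
base-`p` digits vanishing from index `n` on, so we cut the sum off at `n`). -/
def IsWeakExpansion (p n : ℕ) (f : ℕ → ℕ) (c : ℕ → ℕ → ℕ) : Prop :=
  (∀ i, n ≤ i → c i = 0) ∧ ∀ j, f j = ∑ i ∈ Finset.range n, p ^ i * c i j

/-- The base `p` expansion of `f`: a weak `p`-expansion all of whose digits are
`p`-restricted partitions. -/
def IsBasePExpansion (p n : ℕ) (f : ℕ → ℕ) (c : ℕ → ℕ → ℕ) : Prop :=
  IsWeakExpansion p n f c ∧
    ∀ i, Antitone (c i) ∧ IsRestricted p (c i) ∧ ∀ j, n ≤ j → c i j = 0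

/-- `g` is the sorted (weakly decreasing) rearrangement of the tuple `γ`. -/
def IsSortedOf (γ g : ℕ → ℕ) : Prop :=
  Antitone g ∧ ∃ σ : Equiv.Perm ℕ, ∀ j, g j = γ (σ j)

/-- `μ` `p`-dominates `τ`: there is a weak `p`-expansion `τ = ∑ p^i ⬝ γ i` such that the
sorted rearrangement of each `γ i` is dominated by the `i`-th digit of the base `p`
expansion of `μ`. -/
def PDominates (p n : ℕ) (μ τ : ℕ → ℕ) : Prop :=
  ∃ m c, IsBasePExpansion p n μ m ∧ IsWeakExpansion p n τ c ∧
    ∀ i, ∃ g, IsSortedOf (c i) g ∧ Dominates (m i) g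

/-- The hook partition `(a, 1^b)`. -/
def hookFn (a b : ℕ) : ℕ → ℕ := fun j => if j = 0 then a else if j ≤ b then 1 else 0

/-- The one-part partition `(n)`. -/
def onePartFn (n : ℕ) : ℕ → ℕ := fun j => if j = 0 then n else 0

/-- The two-part partition `(a, b)`. -/
def twoPartFn (a b : ℕ) : ℕ → ℕ := fun j => if j = 0 then a else if j = 1 then b else 0


lemma sum_le_sorted_aux (g : ℕ → ℕ) (hg : Antitone g) (T : Finset ℕ) :
    ∑ j ∈ T, g j ≤ ∑ j ∈ Finset.range T.card, g j := by
  induction T using Finset.strongInduction with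
  | _ T ih =>
    rcases T.eq_empty_or_nonempty with rfl | hne
    · simp
    · set t := T.max' hne with htdef
      have ht : t ∈ T := T.max'_mem hne
      have hsub : T ⊆ Finset.range (t + 1) := fun x hx =>
        Finset.mem_range.2 (Nat.lt_succ_of_le (T.le_max' x hx))
      have hcardle : T.card ≤ t + 1 := by
        simpa using Finset.card_le_card hsub
      have h1 : T.card - 1 ≤ t := Nat.sub_le_of_le_add hcardle
      have hcard : (T.erase t).card = T.card - 1 := Finset.card_erase_of_mem ht
      have hpos : 1 ≤ T.card := Finset.card_pos.2 hne
      have key : ∑ j ∈ T.erase t, g j ≤ ∑ j ∈ Finset.range (T.card - 1), g j := by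
        have := ih (T.erase t) (Finset.erase_ssubset ht)
        rwa [hcard] at this
      calc ∑ j ∈ T, g j = ∑ j ∈ T.erase t, g j + g t := by
            rw [Finset.sum_erase_add _ _ ht]
        _ ≤ ∑ j ∈ Finset.range (T.card - 1), g j + g (T.card - 1) :=
            Nat.add_le_add key (hg h1)
        _ = ∑ j ∈ Finset.range T.card, g j := by
            rw [← Finset.sum_range_succ, Nat.sub_add_cancel hpos]

lemma sum_range_le_sorted (γ g : ℕ → ℕ) (hg : IsSortedOf γ g) (a : ℕ) :
    ∑ j ∈ Finset.range a, γ j ≤ ∑ j ∈ Finset.range a, g j := by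
  obtain ⟨hant, σ, hσ⟩ := hg
  have hγ : ∀ j, γ j = g (σ.symm j) := fun j => by
    rw [hσ (σ.symm j), Equiv.apply_symm_apply]
  calc ∑ j ∈ Finset.range a, γ j = ∑ j ∈ Finset.range a, g (σ.symm j) := by
        simp_rw [hγ]
    _ = ∑ j ∈ (Finset.range a).image σ.symm, g j := by
        rw [Finset.sum_image (fun x _ y _ h => σ.symm.injective h)]
    _ ≤ ∑ j ∈ Finset.range ((Finset.range a).image σ.symm).card, g j :=
        sum_le_sorted_aux g hant _
    _ = ∑ j ∈ Finset.range a, g j := by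
        rw [Finset.card_image_of_injective _ σ.symm.injective, Finset.card_range]

/-- if `μ` `p`-dominates `l` then `μ` dominates `l`. -/
theorem pDominates_implies_dominates (p n : ℕ) (hp : p.Prime) (l μ : ℕ → ℕ)
    (hl : IsPartition n l) (hμ : IsPartition n μ)
    (h : PDominates p n μ l) : Dominates μ l := by
  obtain ⟨m, c, ⟨⟨_, hμexp⟩, _⟩, ⟨_, hlexp⟩, hdom⟩ := h
  intro a
  calc ∑ j ∈ Finset.range a, l j
      = ∑ j ∈ Finset.range a, ∑ i ∈ Finset.range n, p ^ i * c i j := by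
        simp_rw [hlexp]
    _ = ∑ i ∈ Finset.range n, p ^ i * ∑ j ∈ Finset.range a, c i j := by
        rw [Finset.sum_comm]; simp_rw [Finset.mul_sum]
    _ ≤ ∑ i ∈ Finset.range n, p ^ i * ∑ j ∈ Finset.range a, m i j := by
        apply Finset.sum_le_sum
        intro i _
        apply Nat.mul_le_mul_left
        obtain ⟨g, hsort, hgdom⟩ := hdom i
        exact le_trans (sum_range_le_sorted (c i) g hsort a) (hgdom a)
    _ = ∑ j ∈ Finset.range a, ∑ i ∈ Finset.range n, p ^ i * m i j := by
        rw [Finset.sum_comm]; simp_rw [Finset.mul_sum]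
    _ = ∑ j ∈ Finset.range a, μ j := by simp_rw [hμexp]
end

section
/- Let G be a finite group, Ω a finite G-set, and R a commutative ring. For each G-orbit A in Ω × Ω (under the diagonal action), define the R-linear endomorphism a_A of the free module R·Ω by a_A(x) = Σ_{y : (y,x) ∈ A} y. Then the elements a_A, as A ranges over the G-orbits of Ω × Ω, form an R-basis of End_{RG}(R·Ω). -/
open scoped Classical

/-- For a subset `A ⊆ Ω × Ω`, the endomorphism `a_A` of the permutation module `R·Ω`
(realised as `Ω → R`) with `a_A x = ∑_{(y,x) ∈ A} y` on basis elements; its matrix has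
`(y,x)` entry `1` iff `(y,x) ∈ A`. -/
noncomputable def aMap (Ω R : Type) [Fintype Ω] [CommRing R] (A : Set (Ω × Ω)) :
    (Ω → R) →ₗ[R] (Ω → R) :=
  Matrix.toLin' (fun y x => if (y, x) ∈ A then (1 : R) else 0)

/-- The `R`-linear action of `g : G` on the permutation module `Ω → R`, sending the basis
element `δ_ω` to `δ_{g • ω}`. -/
noncomputable def permMap (G Ω R : Type) [Group G] [MulAction G Ω] [CommRing R] (g : G) :
    (Ω → R) →ₗ[R] (Ω → R) :=
  LinearMap.funLeft R R fun y => g⁻¹ • y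

/-- The `RG`-endomorphisms of the permutation module `R·Ω`: the `R`-linear endomorphisms
commuting with the `G`-action. -/
def equivEnd (G Ω R : Type) [Group G] [MulAction G Ω] [CommRing R] :
    Submodule R ((Ω → R) →ₗ[R] (Ω → R)) where
  carrier := {φ | ∀ g : G, φ ∘ₗ permMap G Ω R g = permMap G Ω R g ∘ₗ φ}
  add_mem' := by
    intro a b ha hb g
    simp only [LinearMap.add_comp, LinearMap.comp_add, ha g, hb g]
  zero_mem' := by
    intro g
    simp
  smul_mem' := by
    intro c a ha g
    simp only [LinearMap.smul_comp, LinearMap.comp_smul, ha g]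

/-- Transposition of an endomorphism of `Ω → R` with respect to the standard basis. -/
noncomputable def transposeEnd (Ω R : Type) [Fintype Ω] [CommRing R]
    (φ : (Ω → R) →ₗ[R] (Ω → R)) : (Ω → R) →ₗ[R] (Ω → R) :=
  Matrix.toLin' (LinearMap.toMatrix' φ).transpose

section
variable {G Ω R : Type} [Group G] [MulAction G Ω] [Fintype Ω] [CommRing R]

lemma mk''_out {α : Type} {s : Setoid α} (q : Quotient s) : Quotient.mk'' q.out = q :=
  Quotient.out_eq' q

lemma mem_orbit_out_iff {α : Type} [MulAction G α] (p : α)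
    (q : Quotient (MulAction.orbitRel G α)) :
    p ∈ MulAction.orbit G q.out ↔ Quotient.mk'' p = q := by
  rw [← MulAction.orbitRel.Quotient.orbit_eq_orbit_out q Quotient.out_eq']
  exact MulAction.orbitRel.Quotient.mem_orbit

lemma mk''_smul {α : Type} [MulAction G α] (g : G) (p : α) :
    (Quotient.mk'' (g • p) : Quotient (MulAction.orbitRel G α)) = Quotient.mk'' p :=
  Quotient.sound' ((MulAction.orbitRel_apply).2 (MulAction.mem_orbit p g))

lemma toMatrix'_permMap (g : G) :
    LinearMap.toMatrix' (permMap G Ω R g) = fun x y => if x = g • y then (1:R) else 0 := by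
  ext x y
  simp [LinearMap.toMatrix'_apply, permMap, LinearMap.funLeft_apply, inv_smul_eq_iff, Pi.single_apply]

lemma permMap_eq_toLin' (g : G) :
    permMap G Ω R g = Matrix.toLin' (fun x y => if x = g • y then (1:R) else 0) := by
  rw [← toMatrix'_permMap g, Matrix.toLin'_toMatrix']

lemma comp_permMap (M : Matrix Ω Ω R) (g : G) :
    Matrix.toLin' M ∘ₗ permMap G Ω R g = Matrix.toLin' (fun x y => M x (g • y)) := by
  rw [permMap_eq_toLin' g]; erw [← Matrix.toLin'_mul]
  congr 1
  ext x y
  show ∑ z, M x z * (if z = g • y then (1:R) else 0) = M x (g • y)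
  simp [Matrix.mul_apply, mul_ite, eq_comm]

lemma permMap_comp (M : Matrix Ω Ω R) (g : G) :
    permMap G Ω R g ∘ₗ Matrix.toLin' M = Matrix.toLin' (fun x y => M (g⁻¹ • x) y) := by
  rw [permMap_eq_toLin' g]; erw [← Matrix.toLin'_mul]
  congr 1
  ext x y
  have : ∀ z : Ω, (x = g • z) ↔ (g⁻¹ • x = z) := fun z => (inv_smul_eq_iff).symm
  show ∑ z, (if x = g • z then (1:R) else 0) * M z y = M (g⁻¹ • x) y
  simp [Matrix.mul_apply, ite_mul, this]

lemma equivEnd_iff (M : Matrix Ω Ω R) :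
    Matrix.toLin' M ∈ equivEnd G Ω R ↔ ∀ (g : G) (x y : Ω), M (g • x) (g • y) = M x y := by
  constructor
  · intro h g x y
    have := h g
    rw [comp_permMap, permMap_comp] at this
    have h2 := congrFun (congrFun (Matrix.toLin'.injective this) (g • x)) y
    simpa using h2
  · intro h g
    rw [comp_permMap, permMap_comp]
    congr 1
    ext x y
    have := h g (g⁻¹ • x) y
    simpa using this
end

/-- The indicator matrix of the orbit of `q.out`. -/
noncomputable def ind (G Ω R : Type) [Group G] [MulAction G Ω] [Fintype Ω] [CommRing R]
    (q : Quotient (MulAction.orbitRel G (Ω × Ω))) : Matrix Ω Ω R :=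
  fun y x => if (y, x) ∈ MulAction.orbit G q.out then (1 : R) else 0

lemma aMap_eq_ind (G Ω R : Type) [Group G] [MulAction G Ω] [Fintype Ω] [CommRing R]
    (q : Quotient (MulAction.orbitRel G (Ω × Ω))) :
    aMap Ω R (MulAction.orbit G q.out) = Matrix.toLin' (ind G Ω R q) := rfl

/-- the endomorphisms `a_A`, for `A` ranging over the `G`-orbits of
`Ω × Ω` (diagonal action), form an `R`-basis of `End_{RG}(R·Ω)`: they are linearly
independent and span exactly the submodule of `G`-equivariant endomorphisms. -/
theorem orbit_maps_basis (G Ω R : Type) [Group G] [Finite G] [MulAction G Ω]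
    [Fintype Ω] [CommRing R] :
    LinearIndependent R
      (fun q : Quotient (MulAction.orbitRel G (Ω × Ω)) =>
        aMap Ω R (MulAction.orbit G q.out)) ∧
    Submodule.span R
      (Set.range fun q : Quotient (MulAction.orbitRel G (Ω × Ω)) =>
        aMap Ω R (MulAction.orbit G q.out)) = equivEnd G Ω R := by
  have hent : ∀ (p : Ω × Ω) (q : Quotient (MulAction.orbitRel G (Ω × Ω))),
      ind G Ω R q p.1 p.2 = (if Quotient.mk'' p = q then (1 : R) else 0) := by
    intro p q
    simp only [ind, mem_orbit_out_iff]
  constructor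
  · have li : LinearIndependent R (ind G Ω R) := by
      rw [Fintype.linearIndependent_iff]
      intro c hc q
      have h := congrFun (congrFun hc q.out.1) q.out.2
      simp only [Matrix.sum_apply, Matrix.smul_apply, smul_eq_mul, Matrix.zero_apply,
        Pi.zero_apply] at h
      have h2 : ∀ i : Quotient (MulAction.orbitRel G (Ω × Ω)),
          ind G Ω R i q.out.1 q.out.2 = if i = q then (1:R) else 0 := by
        intro i
        have := hent (q.out.1, q.out.2) i
        simp only at this
        rw [this, mk''_out]
        simp [eq_comm]
      rw [Finset.sum_congr rfl (fun i _ =>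
        show c i * ind G Ω R i q.out.1 q.out.2 = if i = q then c i else 0 from by
          rw [h2 i]; simp [mul_ite])] at h
      simpa [Finset.sum_ite_eq'] using h
    have := li.map' Matrix.toLin'.toLinearMap (LinearEquiv.ker _)
    exact this
  · apply le_antisymm
    · rw [Submodule.span_le]
      rintro _ ⟨q, rfl⟩
      show aMap Ω R (MulAction.orbit G q.out) ∈ (equivEnd G Ω R : Set _)
      rw [aMap_eq_ind, SetLike.mem_coe, equivEnd_iff]
      intro g x y
      have h1 : ((g • x, g • y) : Ω × Ω) = g • (x, y) := rfl
      simp only [ind, h1, mem_orbit_out_iff, mk''_smul]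
    · intro φ hφ
      set M := LinearMap.toMatrix' φ with hM
      have hφ' : Matrix.toLin' M ∈ equivEnd G Ω R := by
        rw [hM, Matrix.toLin'_toMatrix']; exact hφ
      have hconst := (equivEnd_iff M).1 hφ'
      have hdecomp : φ = ∑ q : Quotient (MulAction.orbitRel G (Ω × Ω)),
          M q.out.1 q.out.2 • aMap Ω R (MulAction.orbit G q.out) := by
        apply LinearMap.toMatrix'.injective
        ext x y
        simp only [map_sum, map_smul, aMap_eq_ind, LinearMap.toMatrix'_toLin',
          Matrix.sum_apply, Finset.sum_apply, Pi.smul_apply, smul_eq_mul, ← hM]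
        have h2 : ∀ i : Quotient (MulAction.orbitRel G (Ω × Ω)),
            ind G Ω R i x y = if i = Quotient.mk'' (x, y) then (1:R) else 0 := by
          intro i
          have := hent (x, y) i
          simp only at this
          rw [this]
          simp [eq_comm]
        rw [Finset.sum_congr rfl (fun i _ =>
          show (M i.out.1 i.out.2 • ind G Ω R i) x y
              = if i = Quotient.mk'' (x, y) then M i.out.1 i.out.2 else 0 from by
            simp [Matrix.smul_apply, h2 i, mul_ite])]
        rw [Finset.sum_ite_eq' Finset.univ (Quotient.mk'' (x, y))
          (fun i => M i.out.1 i.out.2)]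
        simp only [Finset.mem_univ, if_true]
        set q0 : Quotient (MulAction.orbitRel G (Ω × Ω)) := Quotient.mk'' (x, y) with hq0
        have : q0.out ∈ MulAction.orbit G ((x, y) : Ω × Ω) := by
          have := Quotient.exact' (s₁ := MulAction.orbitRel G (Ω × Ω))
            (mk''_out q0 |>.trans hq0)
          exact (MulAction.orbitRel_apply).1 this
        obtain ⟨g, hg⟩ := this
        rw [← hg]
        exact (hconst g x y).symm
      rw [hdecomp]
      exact Submodule.sum_mem _ fun q _ =>
        Submodule.smul_mem _ _ (Submodule.subset_span ⟨q, rfl⟩)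
end

section
/- Let p be a prime not dividing n. Then every partition μ of n dominating the hook partition (n-1, 1) p-dominates (n-1,1). Consequently, writing n = Σ_{i≥0} p^i n_i in base p with n_0 ≠ 0, the partition (n-1,1) has weak p-expansion with γ(0) = (n_0 - 1, 1) and γ(i) = (n_i, 0) for i ≥ 1, and for μ = (n) (the unique partition strictly dominating (n-1,1)) each sorted γ(i) is dominated by the i-th digit partition of the base p expansion of μ. -/
lemma digit_sum (p m : ℕ) : ∀ N, ∑ i ∈ Finset.range N, p ^ i * (m / p ^ i % p) = m % p ^ N := by
  intro N
  induction N with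
  | zero => simp [Nat.mod_one]
  | succ N ih =>
    rw [Finset.sum_range_succ, ih]
    have h1 : m % p ^ (N + 1) % p ^ N = m % p ^ N :=
      Nat.mod_mod_of_dvd m (pow_dvd_pow p (Nat.le_succ N))
    have h2 : m % p ^ (N + 1) / p ^ N = m / p ^ N % p := by
      rw [pow_succ]; exact Nat.mod_mul_right_div_self m (p ^ N) p
    have h3 := Nat.div_add_mod (m % p ^ (N + 1)) (p ^ N)
    rw [h1, h2] at h3
    omega

lemma digit_sum_eq (p m N : ℕ) (h : m < p ^ N) :
    ∑ i ∈ Finset.range N, p ^ i * (m / p ^ i % p) = m := by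
  rw [digit_sum]; exact Nat.mod_eq_of_lt h

lemma antitone_onePart (a : ℕ) : Antitone (onePartFn a) := by
  intro i j hij
  simp only [onePartFn]
  split_ifs <;> omega

lemma antitone_twoPart (a b : ℕ) (hba : b ≤ a) : Antitone (twoPartFn a b) := by
  intro i j hij
  simp only [twoPartFn]
  split_ifs <;> omega

lemma sum_support2 (f : ℕ → ℕ) (hf : ∀ j, 2 ≤ j → f j = 0) :
    ∀ k, 2 ≤ k → ∑ i ∈ Finset.range k, f i = f 0 + f 1 := by
  intro k hk
  induction k with
  | zero => omega
  | succ k ih =>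
    rcases Nat.lt_or_ge k 2 with h | h
    · interval_cases k
      · omega
      · simp [Finset.sum_range_succ]
    · rw [Finset.sum_range_succ, ih h, hf k h]
      omega

lemma dominates_of_support2 (μ l : ℕ → ℕ) (hl : ∀ j, 2 ≤ j → l j = 0)
    (h0 : l 0 ≤ μ 0) (h1 : l 0 + l 1 ≤ μ 0 + μ 1) : Dominates μ l := by
  intro a
  rcases Nat.lt_or_ge a 2 with h | h
  · interval_cases a
    · simp
    · simpa using h0
  · rw [sum_support2 l hl a h]
    calc l 0 + l 1 ≤ μ 0 + μ 1 := h1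
      _ = ∑ i ∈ Finset.range 2, μ i := by simp [Finset.sum_range_succ]
      _ ≤ ∑ i ∈ Finset.range a, μ i :=
          Finset.sum_le_sum_of_subset (Finset.range_subset_range.2 h)

lemma dominates_refl (f : ℕ → ℕ) : Dominates f f := fun _ => le_rfl

lemma expand_sum (p k α : ℕ) (t : ℕ → ℕ) :
    ∑ i ∈ Finset.range (k + 2), p ^ i * (if i = 0 then α else t i) =
      ∑ i ∈ Finset.range (k + 1), p ^ (i + 1) * t (i + 1) + α := by
  rw [Finset.sum_range_succ']
  simp


/-- if `p` does not divide `n`, every partition `μ` of `n` dominating the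
hook `(n-1, 1)` also `p`-dominates it. -/
theorem pDominates_hook_n_sub_one_one (p n : ℕ) (hp : p.Prime) (hn : 2 ≤ n)
    (hpn : ¬ p ∣ n) (μ : ℕ → ℕ) (hμ : IsPartition n μ)
    (hdom : Dominates μ (hookFn (n - 1) 1)) :
    PDominates p n μ (hookFn (n - 1) 1) := by
  obtain ⟨hanti, hzero, hsum⟩ := hμ
  have hp1 : 1 < p := hp.one_lt
  have hn0 : 1 ≤ n % p := Nat.one_le_iff_ne_zero.2 fun h => hpn (Nat.dvd_of_mod_eq_zero h)
  have hn0p : n % p < p := Nat.mod_lt n (by omega)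
  obtain ⟨k, hk⟩ : ∃ k, n = k + 2 := ⟨n - 2, by omega⟩
  set n0 := n % p with hn0def
  -- classification of μ
  have hd1 : n - 1 ≤ μ 0 := by simpa [hookFn, Finset.sum_range_one] using hdom 1
  have hμ0n : μ 0 ≤ n := by
    calc μ 0 ≤ ∑ i ∈ Finset.range n, μ i :=
          Finset.single_le_sum (fun i _ => Nat.zero_le _) (Finset.mem_range.2 (by omega))
      _ = n := hsum
  have htail : ∑ i ∈ Finset.range (k + 1), μ (i + 1) + μ 0 = n := by
    rw [← hsum, hk]
    exact (Finset.sum_range_succ' μ (k + 1)).symm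
  by_cases hcase : μ 0 = n
  · -- μ = (n)
    have htail0 : ∑ i ∈ Finset.range (k + 1), μ (i + 1) = 0 := by omega
    have hμeq : μ = onePartFn n := by
      funext j
      simp only [onePartFn]
      split_ifs with hj
      · rw [hj]; exact hcase
      · rcases Nat.lt_or_ge j n with hjn | hjn
        · have hmem : μ (j - 1 + 1) = 0 :=
            (Finset.sum_eq_zero_iff.1 htail0) (j - 1) (Finset.mem_range.2 (by omega))
          have hj1 : j - 1 + 1 = j := by omega
          rwa [hj1] at hmem
        · exact hzero j hjn
    rw [hμeq]
    -- digits of n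
    set d : ℕ → ℕ := fun i => n / p ^ i % p with hddef
    have hd0 : d 0 = n0 := by simp [hddef, hn0def]
    have hdlt : ∀ i, d i < p := fun i => Nat.mod_lt _ (by omega)
    have hnpow : n < p ^ n := Nat.lt_pow_self hp1
    have hdzero : ∀ i, n ≤ i → d i = 0 := by
      intro i hi
      have : n < p ^ i := lt_of_lt_of_le hnpow (Nat.pow_le_pow_right (by omega) hi)
      simp [hddef, Nat.div_eq_of_lt this]
    have hdsum : ∑ i ∈ Finset.range n, p ^ i * d i = n := digit_sum_eq p n n hnpow
    refine ⟨fun i j => onePartFn (d i) j,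
      fun i j => if i = 0 then twoPartFn (n0 - 1) 1 j else onePartFn (d i) j, ?_, ?_, ?_⟩
    · refine ⟨⟨?_, ?_⟩, ?_⟩
      · intro i hi
        funext j
        simp [onePartFn, hdzero i hi]
      · intro j
        by_cases hj : j = 0
        · subst hj
          have h3 : ∑ i ∈ Finset.range n, p ^ i * onePartFn (d i) 0 =
              ∑ i ∈ Finset.range n, p ^ i * d i :=
            Finset.sum_congr rfl fun i _ => by
              rw [show onePartFn (d i) 0 = d i from rfl]
          show onePartFn n 0 = ∑ i ∈ Finset.range n, p ^ i * onePartFn (d i) 0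
          rw [h3, hdsum]
          rfl
        · simp [onePartFn, hj]
      · intro i
        refine ⟨antitone_onePart _, ?_, ?_⟩
        · intro j
          cases j with
          | zero => simpa [onePartFn] using hdlt i
          | succ j => simp [onePartFn]; omega
        · intro j hj
          have : j ≠ 0 := by omega
          simp [onePartFn, this]
    · constructor
      · intro i hi
        have hi0 : i ≠ 0 := by omega
        funext j
        simp [hi0, onePartFn, hdzero i hi]
      · intro j
        rcases Nat.lt_or_ge j 2 with hj | hj
        · interval_cases j
          · -- coordinate 0
            rw [hk, expand_sum p k (twoPartFn (n0 - 1) 1 0) (fun i => onePartFn (d i) 0)]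
            have hT : ∑ i ∈ Finset.range (k + 1), p ^ (i + 1) * d (i + 1) + n0 = n := by
              have h2 : ∑ i ∈ Finset.range (k + 2), p ^ i * d i = n := by
                rw [← hk]; exact hdsum
              rw [Finset.sum_range_succ'] at h2
              simpa [hd0] using h2
            have h3 : ∑ i ∈ Finset.range (k + 1), p ^ (i + 1) * onePartFn (d (i + 1)) 0 =
                ∑ i ∈ Finset.range (k + 1), p ^ (i + 1) * d (i + 1) :=
              Finset.sum_congr rfl fun i _ => by
                rw [show onePartFn (d (i + 1)) 0 = d (i + 1) from rfl]
            rw [h3, show hookFn (k + 2 - 1) 1 0 = k + 1 from rfl,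
              show twoPartFn (n0 - 1) 1 0 = n0 - 1 from rfl]
            omega
          · -- coordinate 1
            rw [hk, expand_sum p k (twoPartFn (n0 - 1) 1 1) (fun i => onePartFn (d i) 1)]
            simp [onePartFn, twoPartFn, hookFn]
        · -- coordinates ≥ 2
          have hj0 : j ≠ 0 := by omega
          have hj1 : j ≠ 1 := by omega
          have hjle : ¬ j ≤ 1 := by omega
          simp [hookFn, onePartFn, twoPartFn, hj0, hj1, hjle]
    · intro i
      by_cases hi : i = 0
      · subst hi
        by_cases h1 : n0 = 1
        · refine ⟨onePartFn 1, ⟨antitone_onePart 1, Equiv.swap 0 1, ?_⟩, ?_⟩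
          · intro j
            rcases Nat.lt_or_ge j 2 with hj | hj
            · interval_cases j
              · simp [Equiv.swap_apply_left, onePartFn, twoPartFn]
              · simp [Equiv.swap_apply_right, onePartFn, twoPartFn, h1]
            · rw [Equiv.swap_apply_of_ne_of_ne (by omega) (by omega)]
              simp only [if_pos rfl]
              have hj0 : j ≠ 0 := by omega
              have hj1 : j ≠ 1 := by omega
              simp [onePartFn, twoPartFn, hj0, hj1]
          · apply dominates_of_support2
            · intro j hj
              have : j ≠ 0 := by omega
              simp [onePartFn, this]
            · simp [onePartFn, hd0, h1]
            · simp [onePartFn, hd0, h1]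
        · refine ⟨fun j => twoPartFn (n0 - 1) 1 j, ⟨antitone_twoPart _ _ (by omega), Equiv.refl ℕ, fun j => by simp⟩, ?_⟩
          apply dominates_of_support2
          · intro j hj
            have hj0 : j ≠ 0 := by omega
            have hj1 : j ≠ 1 := by omega
            simp [twoPartFn, hj0, hj1]
          · show twoPartFn (n0 - 1) 1 0 ≤ onePartFn (d 0) 0
            rw [show twoPartFn (n0 - 1) 1 0 = n0 - 1 from rfl,
              show onePartFn (d 0) 0 = d 0 from rfl, hd0]
            omega
          · show twoPartFn (n0 - 1) 1 0 + twoPartFn (n0 - 1) 1 1 ≤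
              onePartFn (d 0) 0 + onePartFn (d 0) 1
            rw [show twoPartFn (n0 - 1) 1 0 = n0 - 1 from rfl,
              show twoPartFn (n0 - 1) 1 1 = 1 from rfl,
              show onePartFn (d 0) 0 = d 0 from rfl,
              show onePartFn (d 0) 1 = 0 from rfl, hd0]
            omega
      · refine ⟨fun j => onePartFn (d i) j, ⟨antitone_onePart _, Equiv.refl ℕ, fun j => by simp [hi]⟩, dominates_refl _⟩
  · -- μ = (n-1, 1)
    have hμ0 : μ 0 = n - 1 := by omega
    have hle : ∑ i ∈ Finset.range (k + 1), μ (i + 1) = 1 := by omega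
    have hμ1 : μ 1 = 1 := by
      have h1le : μ 1 ≤ 1 := by
        have := Finset.single_le_sum (f := fun i => μ (i + 1))
          (fun i _ => Nat.zero_le _) (Finset.mem_range.2 (show 0 < k + 1 by omega))
        simpa [hle] using this
      have h1ge : 1 ≤ μ 1 := by
        by_contra h
        have h0 : ∀ i ∈ Finset.range (k + 1), μ (i + 1) = 0 := by
          intro i _
          have := hanti (show 1 ≤ i + 1 by omega)
          omega
        rw [Finset.sum_eq_zero h0] at hle
        omega
      omega
    have hμrest : ∀ j, 2 ≤ j → μ j = 0 := by
      intro j hj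
      rcases Nat.lt_or_ge j n with hjn | hjn
      · by_contra h
        have hj1 : 1 ≤ μ j := by omega
        have hsum2 : 2 ≤ ∑ i ∈ Finset.range (k + 1), μ (i + 1) := by
          have h01 : (0 : ℕ) ∈ Finset.range (k + 1) := Finset.mem_range.2 (by omega)
          have hj2 : (j - 1) ∈ (Finset.range (k + 1)).erase 0 :=
            Finset.mem_erase.2 ⟨by omega, Finset.mem_range.2 (by omega)⟩
          have hj1' : j - 1 + 1 = j := by omega
          have hsplit : μ 1 + ∑ i ∈ (Finset.range (k + 1)).erase 0, μ (i + 1) =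
              ∑ i ∈ Finset.range (k + 1), μ (i + 1) := by
            simpa using Finset.add_sum_erase _ (fun i => μ (i + 1)) h01
          have h2 : μ j ≤ ∑ i ∈ (Finset.range (k + 1)).erase 0, μ (i + 1) := by
            have := Finset.single_le_sum (f := fun i => μ (i + 1))
              (fun i _ => Nat.zero_le _) hj2
            simpa [hj1'] using this
          omega
        omega
      · exact hzero j hjn
    have hμeq : μ = hookFn (n - 1) 1 := by
      funext j
      rcases Nat.lt_or_ge j 2 with hj | hj
      · interval_cases j
        · simpa [hookFn] using hμ0
        · simpa [hookFn] using hμ1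
      · have hj0 : j ≠ 0 := by omega
        have hjle : ¬ j ≤ 1 := by omega
        simp [hookFn, hj0, hjle, hμrest j hj]
    rw [hμeq]
    -- construct r, b
    set q := n / p with hqdef
    have hq : p * q + n0 = n := Nat.div_add_mod n p
    obtain ⟨r, b, hr1, hrp, hrb, h2b⟩ :
        ∃ r b, 1 ≤ r ∧ r ≤ p ∧ r + p * b = n - 1 ∧ 2 * b ≤ p * b := by
      by_cases h1 : n0 = 1
      · have hq1 : 1 ≤ q := by
          rcases Nat.eq_zero_or_pos q with h | h
          · rw [h] at hq; omega
          · exact h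
        obtain ⟨q', hq'⟩ : ∃ q', q = q' + 1 := ⟨q - 1, by omega⟩
        refine ⟨p, q', by omega, le_rfl, ?_, Nat.mul_le_mul_right q' (by omega)⟩
        have hmul : p * (q' + 1) = p * q' + p := by ring
        rw [hq', hmul] at hq
        omega
      · refine ⟨n0 - 1, q, by omega, by omega, by omega, Nat.mul_le_mul_right q (by omega)⟩
    have hbk : b ≤ k + 1 := by omega
    have hbpow : b < p ^ (k + 1) := by
      have h1 : k + 1 < 2 ^ (k + 1) := Nat.lt_two_pow_self
      have h2 : 2 ^ (k + 1) ≤ p ^ (k + 1) := Nat.pow_le_pow_left (by omega) (k + 1)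
      omega
    set e : ℕ → ℕ := fun i => b / p ^ i % p with hedef
    have helt : ∀ i, e i < p := fun i => Nat.mod_lt _ (by omega)
    have hezero : ∀ i, k + 1 ≤ i → e i = 0 := by
      intro i hi
      have : b < p ^ i := lt_of_lt_of_le hbpow (Nat.pow_le_pow_right (by omega) hi)
      simp [hedef, Nat.div_eq_of_lt this]
    have hesum : ∑ i ∈ Finset.range (k + 1), p ^ i * e i = b := digit_sum_eq p b (k + 1) hbpow
    have hbase : IsBasePExpansion p n (hookFn (n - 1) 1)
        (fun i j => if i = 0 then twoPartFn r 1 j else onePartFn (e (i - 1)) j) := by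
      refine ⟨⟨?_, ?_⟩, ?_⟩
      · intro i hi
        have hi0 : i ≠ 0 := by omega
        have hie : k + 1 ≤ i - 1 := by omega
        funext j
        simp [hi0, onePartFn, hezero _ hie]
      · intro j
        rcases Nat.lt_or_ge j 2 with hj | hj
        · interval_cases j
          · rw [hk, expand_sum p k (twoPartFn r 1 0) (fun i => onePartFn (e (i - 1)) 0)]
            have h3 : ∑ i ∈ Finset.range (k + 1), p ^ (i + 1) * onePartFn (e (i + 1 - 1)) 0 =
                p * ∑ i ∈ Finset.range (k + 1), p ^ i * e i := by
              rw [Finset.mul_sum]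
              refine Finset.sum_congr rfl fun i _ => ?_
              rw [show onePartFn (e (i + 1 - 1)) 0 = e i from rfl, pow_succ]
              ring
            rw [h3, hesum, show hookFn (k + 2 - 1) 1 0 = k + 1 from rfl,
              show twoPartFn r 1 0 = r from rfl]
            omega
          · rw [hk, expand_sum p k (twoPartFn r 1 1) (fun i => onePartFn (e (i - 1)) 1)]
            simp [onePartFn, twoPartFn, hookFn]
        · have hj0 : j ≠ 0 := by omega
          have hj1 : j ≠ 1 := by omega
          have hjle : ¬ j ≤ 1 := by omega
          simp [hookFn, onePartFn, twoPartFn, hj0, hj1, hjle]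
      · intro i
        by_cases hi : i = 0
        · subst hi
          refine ⟨antitone_twoPart _ _ hr1, ?_, ?_⟩
          · intro j
            rcases Nat.lt_or_ge j 2 with hj | hj
            · interval_cases j
              · simp [twoPartFn]; omega
              · simp [twoPartFn]; omega
            · have hj0 : j ≠ 0 := by omega
              have hj1 : j ≠ 1 := by omega
              have hj1' : j + 1 ≠ 1 := by omega
              simp [twoPartFn, hj0, hj1, hj1']; omega
          · intro j hj
            have hj0 : j ≠ 0 := by omega
            have hj1 : j ≠ 1 := by omega
            simp [twoPartFn, hj0, hj1]
        · refine ⟨by simpa [hi] using antitone_onePart (e (i - 1)), ?_, ?_⟩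
          · intro j
            cases j with
            | zero => simpa [hi, onePartFn] using helt (i - 1)
            | succ j => simp [hi, onePartFn]; omega
          · intro j hj
            have hj0 : j ≠ 0 := by omega
            simp [hi, onePartFn, hj0]
    refine ⟨_, _, hbase, hbase.1, ?_⟩
    intro i
    refine ⟨fun j => if i = 0 then twoPartFn r 1 j else onePartFn (e (i - 1)) j,
      ⟨(hbase.2 i).1, Equiv.refl ℕ, fun j => rfl⟩, dominates_refl _⟩
end

section
/- Let p be a prime with p < n < 2p and p ∤ n, and let r ≥ 1. Every partition μ of n in the dominance-upward closure of the hooks {(a,1^b) : a+b = n, 1 ≤ b ≤ r} p-dominates some hook (a, 1^b) with 1 ≤ b ≤ r. -/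
/-- the cycle (0 1 2 ... s) as a permutation of ℕ -/
def cycPerm (s : ℕ) : Equiv.Perm ℕ where
  toFun j := if j < s then j + 1 else if j = s then 0 else j
  invFun j := if j = 0 then s else if j ≤ s then j - 1 else j
  left_inv j := by dsimp only; split_ifs <;> (try omega) <;> simp_all
  right_inv j := by dsimp only; split_ifs <;> (try omega) <;> simp_all <;> omega

lemma sum_two {n : ℕ} (hn : 2 ≤ n) (g : ℕ → ℕ) (hg : ∀ i, 2 ≤ i → g i = 0) :
    ∑ i ∈ Finset.range n, g i = g 0 + g 1 := by
  have : ∑ i ∈ Finset.range 2, g i = ∑ i ∈ Finset.range n, g i :=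
    Finset.sum_subset (Finset.range_subset_range.2 hn)
      (fun x _ hx => hg x (by simp at hx; omega))
  rw [← this]
  simp [Finset.sum_range_succ]

lemma sum_ind (s : ℕ) : ∀ k, ∑ j ∈ Finset.range k, (if j < s then 1 else 0) = min k s := by
  intro k
  induction k with
  | zero => simp
  | succ k ih => rw [Finset.sum_range_succ, ih]; split_ifs <;> omega

lemma hook_psum (a b : ℕ) (hb : 1 ≤ b) :
    ∀ k, ∑ j ∈ Finset.range k, hookFn a b j = if k = 0 then 0 else a + min (k - 1) b := by
  intro k
  induction k with
  | zero => simp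
  | succ k ih =>
    rw [Finset.sum_range_succ, ih]
    unfold hookFn
    by_cases hk : k = 0
    · subst hk; simp
    · rw [if_neg hk, if_neg (by omega : ¬ k + 1 = 0)]
      split_ifs <;> omega

lemma hook_anti (a b : ℕ) (ha : 1 ≤ a) : Antitone (hookFn a b) := by
  apply antitone_nat_of_succ_le
  intro j
  unfold hookFn
  split_ifs <;> (try omega) <;> simp_all

lemma dom_min (ν : ℕ → ℕ) (N : ℕ) (hanti : Antitone ν) (hvan : ∀ i, N ≤ i → ν i = 0)
    (k : ℕ) : min k (∑ i ∈ Finset.range N, ν i) ≤ ∑ i ∈ Finset.range k, ν i := by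
  by_cases hpos : ∀ i < k, 1 ≤ ν i
  · calc min k (∑ i ∈ Finset.range N, ν i) ≤ k := min_le_left _ _
      _ = ∑ _i ∈ Finset.range k, 1 := by simp
      _ ≤ ∑ i ∈ Finset.range k, ν i :=
        Finset.sum_le_sum (fun i hi => hpos i (Finset.mem_range.1 hi))
  · push_neg at hpos
    obtain ⟨i, hik, hi0⟩ := hpos
    have hi0' : ν i = 0 := by omega
    have h0 : ∀ j, k ≤ j → ν j = 0 := fun j hj =>
      Nat.le_zero.1 ((hanti (le_of_lt (lt_of_lt_of_le hik hj))).trans_eq hi0')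
    have e1 : ∑ j ∈ Finset.range k, ν j = ∑ j ∈ Finset.range (max k N), ν j :=
      Finset.sum_subset (Finset.range_subset_range.2 (le_max_left _ _))
        (fun x _ hx => h0 x (by simpa using hx))
    have e2 : ∑ j ∈ Finset.range N, ν j = ∑ j ∈ Finset.range (max k N), ν j :=
      Finset.sum_subset (Finset.range_subset_range.2 (le_max_right _ _))
        (fun x _ hx => hvan x (by simpa using hx))
    rw [e1, ← e2]
    exact min_le_right _ _

/-- digit tuple with one layer -/
def digitsA (f : ℕ → ℕ) : ℕ → ℕ → ℕ
  | 0 => f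
  | _+1 => fun _ => 0

/-- digit tuple with two layers -/
def digitsB (f g : ℕ → ℕ) : ℕ → ℕ → ℕ
  | 0 => f
  | 1 => g
  | _+2 => fun _ => 0

/-- for `p < n < 2p`, `p ∤ n`, every partition of `n` in the
dominance-upward closure of the hooks `(a,1^b)` with `1 ≤ b ≤ r` `p`-dominates one of
those hooks. -/
theorem pDominates_hook_of_dominates_middle (p n r : ℕ) (hp : p.Prime)
    (h1 : p < n) (h2 : n < 2 * p) (hpn : ¬ p ∣ n) (hr : 1 ≤ r)
    (μ : ℕ → ℕ) (hμ : IsPartition n μ)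
    (h : ∃ a b, a + b = n ∧ 1 ≤ b ∧ b ≤ r ∧ Dominates μ (hookFn a b)) :
    ∃ a b, a + b = n ∧ 1 ≤ b ∧ b ≤ r ∧ PDominates p n μ (hookFn a b) := by
  obtain ⟨a, b, hab, hb1, hbr, hdom⟩ := h
  obtain ⟨hanti, hvan, hsum⟩ := hμ
  have hp2 : 2 ≤ p := hp.two_le
  have hn2 : 2 ≤ n := by omega
  have hμ0n : μ 0 ≤ n := by
    have : ∑ i ∈ Finset.range 1, μ i ≤ ∑ i ∈ Finset.range n, μ i :=
      Finset.sum_le_sum_of_subset (Finset.range_subset_range.2 (by omega))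
    simpa [hsum] using this
  have hμ01 : μ 0 + μ 1 ≤ n := by
    have : ∑ i ∈ Finset.range 2, μ i ≤ ∑ i ∈ Finset.range n, μ i :=
      Finset.sum_le_sum_of_subset (Finset.range_subset_range.2 hn2)
    simpa [hsum, Finset.sum_range_succ] using this
  have h10 : μ 1 ≤ μ 0 := hanti (by omega : (0:ℕ) ≤ 1)
  have hμ1p : μ 1 < p := by omega
  have hzero : ∀ (mm : ℕ → ℕ), ∃ g, IsSortedOf (fun _ => (0:ℕ)) g ∧ Dominates mm g :=
    fun mm => ⟨fun _ => 0, ⟨antitone_const, Equiv.refl ℕ, fun _ => rfl⟩, fun k => by simp⟩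
  have hid : ∀ f : ℕ → ℕ, Antitone f → IsSortedOf f f :=
    fun f hf => ⟨hf, Equiv.refl ℕ, fun _ => rfl⟩
  have h1anti : Antitone (onePartFn 1) := by
    apply antitone_nat_of_succ_le
    intro j
    unfold onePartFn
    split_ifs <;> (try omega) <;> simp_all
  have hzfun : ∀ i : ℕ, Antitone (fun _ : ℕ => (0:ℕ)) ∧ IsRestricted p (fun _ : ℕ => (0:ℕ))
      ∧ ∀ j : ℕ, n ≤ j → (fun _ : ℕ => (0:ℕ)) j = 0 :=
    fun _ => ⟨antitone_const, fun _ => by simpa using by omega, fun _ _ => rfl⟩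
  by_cases hres : μ 0 - μ 1 < p
  · -- case A : μ is p-restricted
    have hmA : IsBasePExpansion p n μ (digitsA μ) := by
      refine ⟨⟨fun i hi => ?_, fun j => ?_⟩, fun i => ?_⟩
      · match i, hi with
        | 0, h => omega
        | (i+1), _ => rfl
      · rw [sum_two hn2 _ (fun i hi => by
          match i, hi with
          | 0, h => omega
          | 1, h => omega
          | (i+2), _ => show p ^ (i+2) * 0 = 0; simp)]
        show μ j = 1 * μ j + p ^ 1 * 0
        ring
      · match i with
        | 0 =>
          refine ⟨hanti, fun i => ?_, hvan⟩
          match i with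
          | 0 => exact hres
          | (i+1) =>
            have : μ (i+1) ≤ μ 1 := hanti (by omega)
            show μ (i+1) - μ (i+2) < p
            omega
        | (i+1) => exact hzfun 0
    have hexp : ∀ τ : ℕ → ℕ, IsWeakExpansion p n τ (digitsA τ) := by
      intro τ
      refine ⟨fun i hi => ?_, fun j => ?_⟩
      · match i, hi with
        | 0, h => omega
        | (i+1), _ => rfl
      · rw [sum_two hn2 _ (fun i hi => by
          match i, hi with
          | 0, h => omega
          | 1, h => omega
          | (i+2), _ => show p ^ (i+2) * 0 = 0; simp)]
        show τ j = 1 * τ j + p ^ 1 * 0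
        ring
    by_cases ha : a = 0
    · -- replace the hook by (1, 1^(n-1))
      refine ⟨1, n - 1, by omega, by omega, by omega, digitsA μ, digitsA (hookFn 1 (n-1)),
        hmA, hexp _, fun i => ?_⟩
      match i with
      | 0 =>
        refine ⟨hookFn 1 (n-1), hid _ (hook_anti 1 (n-1) le_rfl), fun k => ?_⟩
        show ∑ j ∈ Finset.range k, hookFn 1 (n-1) j ≤ ∑ j ∈ Finset.range k, μ j
        have hmin := dom_min μ n hanti hvan k
        rw [hsum] at hmin
        rw [hook_psum 1 (n-1) (by omega)]
        split_ifs <;> omega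
      | (i+1) => exact hzero _
    · refine ⟨a, b, hab, hb1, hbr, digitsA μ, digitsA (hookFn a b), hmA, hexp _, fun i => ?_⟩
      match i with
      | 0 => exact ⟨hookFn a b, hid _ (hook_anti a b (by omega)), hdom⟩
      | (i+1) => exact hzero _
  · -- case B
    have hB : μ 1 + p ≤ μ 0 := by omega
    set ν : ℕ → ℕ := fun j => if j = 0 then μ 0 - p else μ j with hν
    have hνanti : Antitone ν := by
      apply antitone_nat_of_succ_le
      intro j
      by_cases hj : j = 0
      · subst hj
        simp only [hν, if_pos rfl, if_neg (by omega : ¬ (0:ℕ) + 1 = 0)]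
        have h01 : μ (0+1) = μ 1 := rfl
        omega
      · simp only [hν, if_neg hj, if_neg (by omega : ¬ j + 1 = 0)]
        exact hanti (by omega)
    have hνvan : ∀ j, n ≤ j → ν j = 0 := by
      intro j hj
      simp only [hν, if_neg (by omega : ¬ j = 0)]
      exact hvan j hj
    have hmB : IsBasePExpansion p n μ (digitsB ν (onePartFn 1)) := by
      refine ⟨⟨fun i hi => ?_, fun j => ?_⟩, fun i => ?_⟩
      · match i, hi with
        | 0, h => omega
        | 1, h => omega
        | (i+2), _ => rfl
      · rw [sum_two hn2 _ (fun i hi => by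
          match i, hi with
          | 0, h => omega
          | 1, h => omega
          | (i+2), _ => show p ^ (i+2) * 0 = 0; simp)]
        show μ j = 1 * ν j + p ^ 1 * onePartFn 1 j
        by_cases hj : j = 0
        · subst hj
          simp [hν, onePartFn]
          omega
        · simp [hν, onePartFn, hj]
      · match i with
        | 0 =>
          refine ⟨hνanti, fun i => ?_, hνvan⟩
          match i with
          | 0 =>
            show ν 0 - ν 1 < p
            simp only [hν, if_pos rfl, if_neg (by omega : ¬ (1:ℕ) = 0)]
            omega
          | (i+1) =>
            show ν (i+1) - ν (i+2) < p
            simp only [hν, if_neg (by omega : ¬ i+1 = 0), if_neg (by omega : ¬ i+2 = 0)]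
            have : μ (i+1) ≤ μ 1 := hanti (by omega)
            omega
        | 1 =>
          refine ⟨h1anti, fun i => ?_, fun j hj => ?_⟩
          · show onePartFn 1 i - onePartFn 1 (i+1) < p
            unfold onePartFn
            split_ifs <;> omega
          · show onePartFn 1 j = 0
            unfold onePartFn
            rw [if_neg (by omega : ¬ j = 0)]
        | (i+2) => exact hzfun 0
    have hkey : ∀ k, (∑ j ∈ Finset.range (k+1), ν j) + p = ∑ j ∈ Finset.range (k+1), μ j := by
      intro k
      rw [Finset.sum_range_succ' ν k, Finset.sum_range_succ' μ k]
      have he : ∀ i ∈ Finset.range k, ν (i+1) = μ (i+1) := by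
        intro i _
        simp only [hν, if_neg (by omega : ¬ i+1 = 0)]
      rw [Finset.sum_congr rfl he]
      have hν0 : ν 0 = μ 0 - p := by simp [hν]
      omega
    have hsum0 : ∑ j ∈ Finset.range n, ν j = n - p := by
      obtain ⟨n', hn'⟩ : ∃ n', n = n' + 1 := ⟨n - 1, by omega⟩
      have hk := hkey n'
      rw [← hn', hsum] at hk
      omega
    by_cases hbs : b < n - p
    · refine ⟨a, b, hab, hb1, hbr, digitsB ν (onePartFn 1),
        digitsB (hookFn (n-p-b) b) (onePartFn 1), hmB, ⟨fun i hi => ?_, fun j => ?_⟩,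
        fun i => ?_⟩
      · match i, hi with
        | 0, h => omega
        | 1, h => omega
        | (i+2), _ => rfl
      · rw [sum_two hn2 _ (fun i hi => by
          match i, hi with
          | 0, h => omega
          | 1, h => omega
          | (i+2), _ => show p ^ (i+2) * 0 = 0; simp)]
        show hookFn a b j = 1 * hookFn (n-p-b) b j + p ^ 1 * onePartFn 1 j
        unfold hookFn onePartFn
        split_ifs <;> (try omega) <;> simp_all <;> omega
      · match i with
        | 0 =>
          refine ⟨hookFn (n-p-b) b, hid _ (hook_anti _ _ (by omega)), fun k => ?_⟩
          match k with
          | 0 => simp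
          | (k+1) =>
            show ∑ j ∈ Finset.range (k+1), hookFn (n-p-b) b j ≤ ∑ j ∈ Finset.range (k+1), ν j
            rw [hook_psum (n-p-b) b hb1, if_neg (by omega : ¬ k+1 = 0)]
            have hd := hdom (k+1)
            rw [hook_psum a b hb1, if_neg (by omega : ¬ k+1 = 0)] at hd
            have hk2 := hkey k
            omega
        | 1 => exact ⟨onePartFn 1, hid _ h1anti, fun k => le_rfl⟩
        | (i+2) => exact hzero _
    · -- b ≥ n - p : use the hook (p, 1^(n-p))
      refine ⟨p, n - p, by omega, by omega, by omega, digitsB ν (onePartFn 1),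
        digitsB (hookFn 0 (n-p)) (onePartFn 1), hmB, ⟨fun i hi => ?_, fun j => ?_⟩,
        fun i => ?_⟩
      · match i, hi with
        | 0, h => omega
        | 1, h => omega
        | (i+2), _ => rfl
      · rw [sum_two hn2 _ (fun i hi => by
          match i, hi with
          | 0, h => omega
          | 1, h => omega
          | (i+2), _ => show p ^ (i+2) * 0 = 0; simp)]
        show hookFn p (n-p) j = 1 * hookFn 0 (n-p) j + p ^ 1 * onePartFn 1 j
        unfold hookFn onePartFn
        split_ifs <;> (try omega) <;> simp_all <;> omega
      · match i with
        | 0 =>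
          refine ⟨fun j => if j < n - p then 1 else 0,
            ⟨?_, cycPerm (n-p), fun j => ?_⟩, fun k => ?_⟩
          · apply antitone_nat_of_succ_le
            intro j
            split_ifs <;> omega
          · show (if j < n - p then 1 else 0) = hookFn 0 (n-p) (cycPerm (n-p) j)
            simp only [cycPerm, Equiv.coe_fn_mk, hookFn]
            split_ifs <;> (try omega) <;> simp_all
          · show ∑ j ∈ Finset.range k, (if j < n - p then 1 else 0) ≤ ∑ j ∈ Finset.range k, ν j
            rw [sum_ind]
            have hmin := dom_min ν n hνanti hνvan k
            rw [hsum0] at hmin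
            exact hmin
        | 1 => exact ⟨onePartFn 1, hid _ h1anti, fun k => le_rfl⟩
        | (i+2) => exact hzero _
end

section
/- Let p be a prime with n > 2p and r ≥ p. Then μ = (n-p, p) dominates the hook (n-p, 1^p), but μ does not p-dominate any hook (a, 1^b) with 1 ≤ b ≤ r. Hence the dominance-upward closure of the hooks {(a,1^b) : 1 ≤ b ≤ r} is strictly larger than the set of partitions p-dominating some such hook. -/
lemma hook_sum (x b A : ℕ) :
    ∑ j ∈ Finset.range A, hookFn x b j = if A = 0 then 0 else x + min (A - 1) b := by
  induction A with
  | zero => simp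
  | succ k ih =>
    rw [Finset.sum_range_succ, ih]
    rcases Nat.eq_zero_or_pos k with hk | hk
    · subst hk; simp [hookFn]
    · have hk0 : k ≠ 0 := hk.ne'
      rw [if_neg hk0, if_neg (Nat.succ_ne_zero k)]
      simp only [hookFn]
      split_ifs <;> omega

lemma two_sum (x y A : ℕ) :
    ∑ j ∈ Finset.range A, twoPartFn x y j =
      if A = 0 then 0 else if A = 1 then x else x + y := by
  induction A with
  | zero => simp
  | succ k ih =>
    rw [Finset.sum_range_succ, ih]
    rcases Nat.eq_zero_or_pos k with hk | hk
    · subst hk; simp [twoPartFn]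
    · have hk0 : k ≠ 0 := hk.ne'
      rw [if_neg hk0, if_neg (Nat.succ_ne_zero k)]
      simp only [twoPartFn]
      split_ifs <;> omega

lemma sum_le_two (f : ℕ → ℕ) (h : ∀ j, 2 ≤ j → f j = 0) (a : ℕ) :
    ∑ j ∈ Finset.range a, f j ≤ f 0 + f 1 := by
  induction a with
  | zero => simp
  | succ k ih =>
    rw [Finset.sum_range_succ]
    rcases Nat.lt_or_ge k 2 with hk | hk
    · interval_cases k <;> simp [Finset.sum_range_succ]
    · rw [h k hk]; simpa using ih

/-- for `n > 2p` and `r ≥ p`, the partition `(n-p, p)` dominates the hook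
`(n-p, 1^p)` but does not `p`-dominate any hook `(a,1^b)` with `1 ≤ b ≤ r`. -/
theorem two_row_not_pDominates (p n r : ℕ) (hp : p.Prime) (hn : 2 * p < n) (hr : p ≤ r) :
    Dominates (twoPartFn (n - p) p) (hookFn (n - p) p) ∧
      ∀ a b, a + b = n → 1 ≤ b → b ≤ r →
        ¬ PDominates p n (twoPartFn (n - p) p) (hookFn a b) := by
  have hp2 : 2 ≤ p := hp.two_le
  constructor
  · intro a
    rw [hook_sum, two_sum]
    split_ifs <;> omega
  · rintro a b hab hb1 hbr ⟨m, c, ⟨⟨hm0, hmexp⟩, hmprop⟩, ⟨hc0, hcexp⟩, hdom⟩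
    -- digits of μ vanish at column indices ≥ 2
    have hm2 : ∀ i j, 2 ≤ j → m i j = 0 := by
      intro i j hj
      rcases Nat.lt_or_ge i n with hi | hi
      · have hμ : twoPartFn (n - p) p j = 0 := by
          simp only [twoPartFn, if_neg (by omega : ¬ j = 0), if_neg (by omega : ¬ j = 1)]
        have hsum : ∑ i ∈ Finset.range n, p ^ i * m i j = 0 := (hmexp j).symm.trans hμ
        have := Finset.sum_eq_zero_iff.mp hsum i (Finset.mem_range.mpr hi)
        exact (mul_eq_zero.mp this).resolve_left (pow_ne_zero i (by omega))
      · rw [hm0 i hi]; rfl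
    -- the column-1 digits sum to p
    have hcol1 : ∑ i ∈ Finset.range n, p ^ i * m i 1 = p := by
      have := (hmexp 1).symm
      simpa [twoPartFn] using this
    -- split off the i = 0 term
    have hsplit : ∑ i ∈ Finset.range n, p ^ i * m i 1
        = m 0 1 + p * ∑ i ∈ Finset.range (n - 1), p ^ i * m (i + 1) 1 := by
      obtain ⟨k, hk⟩ : ∃ k, n = k + 1 := ⟨n - 1, by omega⟩
      rw [hk, Finset.sum_range_succ', Nat.add_sub_cancel, Finset.mul_sum]
      simp only [pow_zero, one_mul]
      rw [add_comm]
      congr 1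
      refine Finset.sum_congr rfl fun i _ => ?_
      ring
    set X := ∑ i ∈ Finset.range (n - 1), p ^ i * m (i + 1) 1 with hX
    have hm01lt : m 0 1 < p := by
      have h1 := (hmprop 0).2.1 1
      have h2 : m 0 (1 + 1) = 0 := hm2 0 (1 + 1) (by omega)
      omega
    have heq : m 0 1 + p * X = p := by rw [← hsplit]; exact hcol1
    have hXle : X ≤ 1 := by
      have h1 : p * X ≤ p * 1 := by omega
      exact Nat.le_of_mul_le_mul_left h1 (by omega)
    have hX1 : X = 1 := by
      rcases Nat.lt_or_ge X 1 with h | h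
      · exfalso
        have hX0 : X = 0 := by omega
        rw [hX0, mul_zero] at heq
        omega
      · omega
    -- find a digit index i ≥ 1 with m i 1 ≥ 1
    obtain ⟨i0, hi0mem, hi0ne⟩ :=
      Finset.exists_ne_zero_of_sum_ne_zero (s := Finset.range (n - 1))
        (f := fun i => p ^ i * m (i + 1) 1) (by rw [← hX, hX1]; omega)
    set i := i0 + 1 with hidef
    have hi_lt : i < n := by have := Finset.mem_range.mp hi0mem; omega
    have hmi1 : 0 < m i 1 := by
      by_contra hcon
      push_neg at hcon
      apply hi0ne
      simp only [Nat.le_zero] at hcon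
      rw [hcon, mul_zero]
    -- row sums of the weak expansion of the hook
    set S : ℕ → ℕ := fun k => ∑ j ∈ Finset.range (n + 1), c k j with hSdef
    have hτsum : ∑ j ∈ Finset.range (n + 1), hookFn a b j = n := by
      rw [hook_sum, if_neg (Nat.succ_ne_zero n), Nat.add_sub_cancel]
      omega
    have hdouble : ∑ k ∈ Finset.range n, p ^ k * S k = n := by
      simp only [hSdef, Finset.mul_sum]
      rw [Finset.sum_comm]
      calc ∑ j ∈ Finset.range (n + 1), ∑ k ∈ Finset.range n, p ^ k * c k j
          = ∑ j ∈ Finset.range (n + 1), hookFn a b j :=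
            Finset.sum_congr rfl fun j _ => (hcexp j).symm
        _ = n := hτsum
    have hμsum : ∑ k ∈ Finset.range n, p ^ k * (m k 0 + m k 1) = n := by
      simp only [mul_add]
      rw [Finset.sum_add_distrib, ← hmexp 0, ← hmexp 1]
      simp only [twoPartFn, if_pos rfl]
      norm_num
      omega
    -- key bounds from domination
    have hkey : ∀ k, S k ≤ m k 0 + m k 1 ∧ ∀ j, c k j ≤ m k 0 := by
      intro k
      obtain ⟨g, ⟨hganti, σ, hgσ⟩, hgdom⟩ := hdom k
      have hbound : ∀ A, ∑ j ∈ Finset.range A, g j ≤ m k 0 + m k 1 := fun A =>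
        (hgdom A).trans (sum_le_two (m k) (fun j hj => hm2 k j hj) A)
      have hg0 : g 0 ≤ m k 0 := by
        have := hgdom 1
        simpa using this
      have hcg : ∀ j, c k j = g (σ.symm j) := by
        intro j
        rw [hgσ (σ.symm j), Equiv.apply_symm_apply]
      constructor
      · set T := (Finset.range (n + 1)).image (fun j => σ.symm j) with hT
        have hsub : T ⊆ Finset.range (T.sup id + 1) := fun t ht =>
          Finset.mem_range.mpr (Nat.lt_succ_of_le (Finset.le_sup (f := id) ht))
        calc S k = ∑ t ∈ T, g t := by
              rw [hT, Finset.sum_image (fun x _ y _ h => σ.symm.injective h)]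
              exact Finset.sum_congr rfl fun j _ => hcg j
          _ ≤ ∑ t ∈ Finset.range (T.sup id + 1), g t := Finset.sum_le_sum_of_subset hsub
          _ ≤ m k 0 + m k 1 := hbound _
      · intro j
        rw [hcg j]
        exact (hganti (Nat.zero_le _)).trans hg0
    -- the row sum at index i is forced to be exactly m i 0 + m i 1
    have heqi : S i = m i 0 + m i 1 := by
      by_contra hne
      have hlt : S i < m i 0 + m i 1 := lt_of_le_of_ne (hkey i).1 hne
      have hstrict : ∑ k ∈ Finset.range n, p ^ k * S k
          < ∑ k ∈ Finset.range n, p ^ k * (m k 0 + m k 1) := by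
        refine Finset.sum_lt_sum (fun k _ => Nat.mul_le_mul le_rfl (hkey k).1)
          ⟨i, Finset.mem_range.mpr hi_lt, ?_⟩
        exact mul_lt_mul_of_pos_left hlt (pow_pos (by omega) i)
      omega
    -- c i has two distinct nonzero entries
    have hSsum : S i = ∑ j ∈ Finset.range (n + 1), c i j := by simp [hSdef]
    obtain ⟨j, hjmem, hjne⟩ : ∃ j ∈ Finset.range (n + 1), c i j ≠ 0 := by
      apply Finset.exists_ne_zero_of_sum_ne_zero
      omega
    obtain ⟨j', hj'mem, hj'ne⟩ : ∃ j' ∈ (Finset.range (n + 1)).erase j, c i j' ≠ 0 := by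
      apply Finset.exists_ne_zero_of_sum_ne_zero
      have hadd := Finset.add_sum_erase (Finset.range (n + 1)) (c i) hjmem
      have hcj : c i j ≤ m i 0 := (hkey i).2 j
      omega
    have hj'j : j' ≠ j := (Finset.mem_erase.mp hj'mem).1
    -- but every nonzero entry of c i sits at index 0, contradiction
    have hbig : ∀ jj, c i jj ≠ 0 → jj = 0 := by
      intro jj hjj
      have h1 : p ^ i * c i jj ≤ hookFn a b jj := by
        rw [hcexp jj]
        exact Finset.single_le_sum (f := fun k => p ^ k * c k jj)
          (fun k _ => Nat.zero_le _) (Finset.mem_range.mpr hi_lt)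
      have h2 : p ≤ p ^ i := Nat.le_self_pow (by omega) p
      have h3 : p ^ i * 1 ≤ p ^ i * c i jj := Nat.mul_le_mul le_rfl (by omega)
      rw [mul_one] at h3
      by_contra hne
      have hhook : hookFn a b jj ≤ 1 := by
        simp only [hookFn, if_neg hne]
        split_ifs <;> omega
      omega
    have e1 := hbig j hjne
    have e2 := hbig j' hj'ne
    exact hj'j (by omega)
end

section
/- Let p be a prime with n > 2p, p ∤ n, and 1 ≤ r < p. Then every partition μ of n in the dominance-upward closure of the hooks {(a,1^b) : a+b=n, 1 ≤ b ≤ r} p-dominates some hook in that set. -/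
def dgt (p x i : ℕ) : ℕ := x / p ^ i % p

lemma dgt_sum (p : ℕ) (x : ℕ) : ∀ t, ∑ i ∈ Finset.range t, p ^ i * dgt p x i = x % p ^ t := by
  intro t
  induction t with
  | zero => simp [Nat.mod_one]
  | succ t ih => rw [Finset.sum_range_succ, ih, Nat.mod_pow_succ]; rfl

lemma dgt_sum_of_lt (p x t : ℕ) (h : x < p ^ t) :
    ∑ i ∈ Finset.range t, p ^ i * dgt p x i = x := by
  rw [dgt_sum, Nat.mod_eq_of_lt h]

lemma dgt_eq_zero (p x t i : ℕ) (h : x < p ^ t) (hi : t ≤ i) (hp : 1 ≤ p) : dgt p x i = 0 := by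
  have : x < p ^ i := lt_of_lt_of_le h (Nat.pow_le_pow_right hp hi)
  simp [dgt, Nat.div_eq_of_lt this]

lemma dgt_lt (p x i : ℕ) (hp : 0 < p) : dgt p x i < p := Nat.mod_lt _ hp

/-- telescoping sum of differences of an antitone function -/
lemma telescope (f : ℕ → ℕ) (hf : Antitone f) (j : ℕ) :
    ∀ N, j ≤ N → ∑ k ∈ Finset.Ico j N, (f k - f (k + 1)) = f j - f N := by
  intro N
  induction N with
  | zero => intro h; interval_cases j; simp
  | succ N ih =>
    intro h
    rcases Nat.lt_or_ge j (N + 1) with h' | h'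
    · have hj : j ≤ N := Nat.lt_succ_iff.mp h'
      rw [Finset.sum_Ico_succ_top hj, ih hj]
      have h1 : f (N + 1) ≤ f N := hf (Nat.le_succ N)
      have h2 : f N ≤ f j := hf hj
      omega
    · have : j = N + 1 := le_antisymm h h'
      subst this; simp

/-- the base p expansion digits of a partition μ -/
def bpe (p n : ℕ) (μ : ℕ → ℕ) (i j : ℕ) : ℕ :=
  ∑ k ∈ Finset.Ico j n, dgt p (μ k - μ (k + 1)) i

lemma part_le (n : ℕ) (μ : ℕ → ℕ) (hμ : IsPartition n μ) (k : ℕ) : μ k ≤ n := by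
  rcases Nat.lt_or_ge k n with h | h
  · calc μ k ≤ ∑ i ∈ Finset.range n, μ i :=
        Finset.single_le_sum (fun i _ => Nat.zero_le _) (Finset.mem_range.mpr h)
    _ = n := hμ.2.2
  · rw [hμ.2.1 k h]; exact Nat.zero_le n

lemma bpe_isBasePExpansion (p n : ℕ) (hp : 1 < p) (hn : 0 < n) (μ : ℕ → ℕ)
    (hμ : IsPartition n μ) : IsBasePExpansion p n μ (bpe p n μ) := by
  have hdiff : ∀ k, μ k - μ (k + 1) < p ^ n := fun k =>
    lt_of_le_of_lt (le_trans (Nat.sub_le _ _) (part_le n μ hμ k)) (Nat.lt_pow_self (n := n) hp)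
  refine ⟨⟨?_, ?_⟩, ?_⟩
  · intro i hi
    funext j
    refine Finset.sum_eq_zero fun k _ => ?_
    exact dgt_eq_zero p _ n i (hdiff k) hi (le_of_lt hp)
  · intro j
    have : ∑ i ∈ Finset.range n, p ^ i * bpe p n μ i j
        = ∑ k ∈ Finset.Ico j n, (μ k - μ (k + 1)) := by
      unfold bpe
      simp_rw [Finset.mul_sum]
      rw [Finset.sum_comm]
      exact Finset.sum_congr rfl fun k _ => dgt_sum_of_lt p _ n (hdiff k)
    rcases le_or_gt j n with hj | hj
    · rw [this, telescope μ hμ.1 j n hj, hμ.2.1 n le_rfl]; omega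
    · rw [this, Finset.Ico_eq_empty (by omega), Finset.sum_empty, hμ.2.1 j (by omega)]
  · intro i
    refine ⟨?_, ?_, ?_⟩
    · intro j j' hjj'
      exact Finset.sum_le_sum_of_subset (Finset.Ico_subset_Ico hjj' le_rfl)
    · intro j
      rcases Nat.lt_or_ge j n with h | h
      · have : bpe p n μ i j = dgt p (μ j - μ (j + 1)) i + bpe p n μ i (j + 1) := by
          unfold bpe; rw [Finset.sum_eq_sum_Ico_succ_bot h]
        have h2 : dgt p (μ j - μ (j + 1)) i < p := dgt_lt _ _ _ (by omega)
        omega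
      · have e1 : bpe p n μ i j = 0 := by unfold bpe; rw [Finset.Ico_eq_empty (by omega)]; rfl
        have e2 : bpe p n μ i (j + 1) = 0 := by
          unfold bpe; rw [Finset.Ico_eq_empty (by omega)]; rfl
        omega
    · intro j hj
      unfold bpe; rw [Finset.Ico_eq_empty (by omega)]; rfl
lemma tail_sum (n : ℕ) (μ : ℕ → ℕ) (hμ : IsPartition n μ) (hn : 0 < n) :
    μ 0 + ∑ j ∈ Finset.Ico 1 n, μ j = n := by
  have h := hμ.2.2
  rw [Finset.range_eq_Ico, Finset.sum_eq_sum_Ico_succ_bot hn] at h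
  norm_num at h
  omega

lemma bpe_zero_tail (p n : ℕ) (μ : ℕ → ℕ) (hp : 1 < p) (hμ : IsPartition n μ)
    (htail : ∑ j ∈ Finset.Ico 1 n, μ j < p) :
    ∀ j, 1 ≤ j → bpe p n μ 0 j = μ j := by
  have hsmall : ∀ k, 1 ≤ k → μ k - μ (k + 1) < p := by
    intro k hk
    rcases lt_or_ge k n with h | h
    · have : μ k ≤ ∑ j ∈ Finset.Ico 1 n, μ j :=
        Finset.single_le_sum (fun i _ => Nat.zero_le _) (Finset.mem_Ico.mpr ⟨hk, h⟩)
      omega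
    · have := hμ.2.1 k h; omega
  intro j hj
  rcases le_or_gt j n with hjn | hjn
  · unfold bpe
    have he : ∀ k ∈ Finset.Ico j n, dgt p (μ k - μ (k + 1)) 0 = μ k - μ (k + 1) := by
      intro k hk
      rw [Finset.mem_Ico] at hk
      unfold dgt
      rw [pow_zero, Nat.div_one, Nat.mod_eq_of_lt (hsmall k (le_trans hj hk.1))]
    rw [Finset.sum_congr rfl he, telescope μ hμ.1 j n hjn, hμ.2.1 n le_rfl]
    omega
  · unfold bpe
    rw [Finset.Ico_eq_empty (by omega), Finset.sum_empty, hμ.2.1 j (by omega)]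

lemma tail_partial (n : ℕ) (μ : ℕ → ℕ) (hA : Antitone μ) (h0 : ∀ i, n ≤ i → μ i = 0) :
    ∀ t, min t (∑ j ∈ Finset.Ico 1 n, μ j) ≤ ∑ j ∈ Finset.range t, μ (j + 1) := by
  have hT : (∑ j ∈ Finset.Ico 1 n, μ j) = ∑ j ∈ Finset.range (n - 1), μ (j + 1) := by
    rw [Finset.sum_Ico_eq_sum_range]
    exact Finset.sum_congr rfl fun k _ => by rw [Nat.add_comm]
  intro t
  induction t with
  | zero => simp
  | succ t ih =>
    rw [Finset.sum_range_succ]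
    by_cases hz : μ (t + 1) = 0
    · have hzero : ∀ k, t ≤ k → μ (k + 1) = 0 := by
        intro k hk
        have := hA (show t + 1 ≤ k + 1 by omega)
        omega
      have key : ∑ j ∈ Finset.Ico 1 n, μ j ≤ ∑ j ∈ Finset.range t, μ (j + 1) := by
        rw [hT]
        rcases le_or_gt (n - 1) t with h | h
        · exact Finset.sum_le_sum_of_subset (Finset.range_subset_range.mpr h)
        · have hsplit : ∑ j ∈ Finset.range t, μ (j + 1) + ∑ j ∈ Finset.Ico t (n - 1), μ (j + 1)
              = ∑ j ∈ Finset.range (n - 1), μ (j + 1) :=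
            Finset.sum_range_add_sum_Ico _ (le_of_lt h)
          have hz2 : ∑ j ∈ Finset.Ico t (n - 1), μ (j + 1) = 0 :=
            Finset.sum_eq_zero fun k hk => hzero k (Finset.mem_Ico.mp hk).1
          omega
      omega
    · omega

lemma min_count (b : ℕ) : ∀ t, ∑ j ∈ Finset.range t, (if j + 1 ≤ b then 1 else 0) = min t b := by
  intro t
  induction t with
  | zero => simp
  | succ t ih => rw [Finset.sum_range_succ, ih]; split_ifs <;> omega
lemma key_lemma (p n : ℕ) (hp : p.Prime) (hn : 2 * p < n) (μ : ℕ → ℕ) (hμ : IsPartition n μ)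
    (b s : ℕ) (hb1 : 1 ≤ b) (hbn : n - μ 0 ≤ b) (hbp : b < p)
    (htail0 : n - μ 0 < p)
    (hs : s + (b - (n - μ 0)) = bpe p n μ 0 0)
    (hsort : 1 ≤ s ∨ (b = 1 ∧ s = 0 ∧ μ 0 = n)) :
    PDominates p n μ (hookFn (n - b) b) := by
  have hp1 : 1 < p := hp.one_lt
  have hn0 : 0 < n := by omega
  have hμ0 : μ 0 ≤ n := part_le n μ hμ 0
  have hT : μ 0 + ∑ j ∈ Finset.Ico 1 n, μ j = n := tail_sum n μ hμ hn0
  have hBP : IsBasePExpansion p n μ (bpe p n μ) := bpe_isBasePExpansion p n hp1 hn0 μ hμ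
  have hF3 : ∑ i ∈ Finset.range n, p ^ i * bpe p n μ i 0 = μ 0 := (hBP.1.2 0).symm
  have htail' : ∑ j ∈ Finset.Ico 1 n, μ j < p := by omega
  have hF2 : ∀ j, 1 ≤ j → bpe p n μ 0 j = μ j := bpe_zero_tail p n μ hp1 hμ htail'
  set c : ℕ → ℕ → ℕ := fun i j =>
    if j = 0 then (if i = 0 then s else bpe p n μ i 0)
    else if i = 0 ∧ j ≤ b then 1 else 0 with hc
  refine ⟨bpe p n μ, c, hBP, ⟨?_, ?_⟩, ?_⟩
  · intro i hi
    funext j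
    have hi0 : i ≠ 0 := by omega
    have hz : bpe p n μ i = 0 := hBP.1.1 i hi
    have hz0 : bpe p n μ i 0 = 0 := by rw [hz]; rfl
    simp [hc, hi0, hz0]
  · intro j
    rcases eq_or_ne j 0 with rfl | hj0
    · show (n - b) = _
      rw [Finset.range_eq_Ico, Finset.sum_eq_sum_Ico_succ_bot hn0]
      have h1 : c 0 0 = s := by simp [hc]
      have h2 : ∀ i ∈ Finset.Ico 1 n, p ^ i * c i 0 = p ^ i * bpe p n μ i 0 := by
        intro i hi
        rw [Finset.mem_Ico] at hi
        have : i ≠ 0 := by omega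
        simp [hc, this]
      rw [h1, Finset.sum_congr rfl h2]
      have h3 : bpe p n μ 0 0 + ∑ i ∈ Finset.Ico 1 n, p ^ i * bpe p n μ i 0 = μ 0 := by
        rw [← hF3, Finset.range_eq_Ico, Finset.sum_eq_sum_Ico_succ_bot hn0]
        simp
      simp only [pow_zero, one_mul]
      omega
    · rcases le_or_gt j b with hjb | hjb
      · have hh : hookFn (n - b) b j = 1 := by simp [hookFn, hj0, hjb]
        rw [hh]
        have h2 : ∀ i, p ^ i * c i j = if i = 0 then 1 else 0 := by
          intro i
          rcases eq_or_ne i 0 with rfl | hi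
          · simp [hc, hj0, hjb]
          · simp [hc, hj0, hjb, hi]
        simp_rw [h2]
        rw [Finset.sum_ite_eq' (Finset.range n) 0 fun _ => (1 : ℕ)]
        simp [hn0]
      · have hh : hookFn (n - b) b j = 0 := by
          simp only [hookFn, if_neg hj0, if_neg (by omega : ¬ j ≤ b)]
        rw [hh]
        symm
        refine Finset.sum_eq_zero fun i _ => ?_
        have : c i j = 0 := by
          simp only [hc, if_neg hj0]
          split_ifs with hcc
          · omega
          · rfl
        rw [this, Nat.mul_zero]
  · intro i
    rcases eq_or_ne i 0 with rfl | hi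
    · rcases hsort with hs1 | ⟨hbb, hs0, hμn⟩
      · refine ⟨c 0, ⟨?_, Equiv.refl ℕ, fun j => rfl⟩, ?_⟩
        · intro j j' hjj'
          have hv : ∀ jj, c 0 jj = if jj = 0 then s else if jj ≤ b then 1 else 0 := by
            intro jj
            rcases eq_or_ne jj 0 with rfl | hjj
            · simp [hc]
            · simp [hc, hjj]
          rw [hv, hv]
          split_ifs <;> omega
        · intro A
          rcases Nat.eq_zero_or_pos A with rfl | hA
          · simp
          · obtain ⟨t, rfl⟩ : ∃ t, A = t + 1 := ⟨A - 1, by omega⟩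
            rw [Finset.sum_range_succ', Finset.sum_range_succ']
            have h1 : ∀ j, c 0 (j + 1) = if j + 1 ≤ b then 1 else 0 := by
              intro j; simp [hc]
            have h2 : ∑ j ∈ Finset.range t, c 0 (j + 1) = min t b := by
              simp_rw [h1]; exact min_count b t
            have h3 : ∀ j ∈ Finset.range t, bpe p n μ 0 (j + 1) = μ (j + 1) :=
              fun j _ => hF2 (j + 1) (by omega)
            rw [h2, Finset.sum_congr rfl h3]
            have h4 := tail_partial n μ hμ.1 hμ.2.1 t
            have h5 : c 0 0 = s := by simp [hc]
            rw [h5]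
            omega
      · refine ⟨fun j => if j = 0 then 1 else 0, ⟨?_, Equiv.swap 0 1, ?_⟩, ?_⟩
        · intro j j' hjj'
          dsimp only
          split_ifs <;> omega
        · intro j
          rcases eq_or_ne j 0 with rfl | h0
          · rw [Equiv.swap_apply_left]
            simp [hc, hbb]
          · rcases eq_or_ne j 1 with rfl | h1
            · rw [Equiv.swap_apply_right]
              simp [hc, hs0]
            · rw [Equiv.swap_apply_of_ne_of_ne h0 h1]
              have hb' : ¬ (j ≤ b) := by omega
              simp [hc, h0, hb']
        · intro A
          rcases Nat.eq_zero_or_pos A with rfl | hA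
          · simp
          · have hL : ∑ j ∈ Finset.range A, (if j = 0 then (1 : ℕ) else 0) = 1 := by
              rw [Finset.sum_ite_eq' (Finset.range A) 0 fun _ => (1 : ℕ)]
              simp [hA]
            rw [hL]
            have hm1 : 1 ≤ bpe p n μ 0 0 := by omega
            calc 1 ≤ bpe p n μ 0 0 := hm1
              _ ≤ ∑ j ∈ Finset.range A, bpe p n μ 0 j :=
                Finset.single_le_sum (fun _ _ => Nat.zero_le _) (Finset.mem_range.mpr hA)
    · refine ⟨c i, ⟨?_, Equiv.refl ℕ, fun j => rfl⟩, ?_⟩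
      · intro j j' hjj'
        simp only [hc, hi, if_false, false_and]
        split_ifs <;> omega
      · intro A
        rcases Nat.eq_zero_or_pos A with rfl | hA
        · simp
        · have h1 : ∀ j, c i j = if j = 0 then bpe p n μ i 0 else 0 := by
            intro j; simp [hc, hi]
          have hL : ∑ j ∈ Finset.range A, c i j = bpe p n μ i 0 := by
            simp_rw [h1]
            rw [Finset.sum_ite_eq' (Finset.range A) 0 fun _ => bpe p n μ i 0]
            simp [hA]
          rw [hL]
          exact Finset.single_le_sum (fun _ _ => Nat.zero_le _) (Finset.mem_range.mpr hA)
/-- for `n > 2p`, `p ∤ n` and `1 ≤ r < p`, every partition of `n` in the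
dominance-upward closure of the hooks `(a,1^b)` with `1 ≤ b ≤ r` `p`-dominates one of
those hooks. -/
theorem pDominates_hook_of_dominates_large (p n r : ℕ) (hp : p.Prime)
    (hn : 2 * p < n) (hpn : ¬ p ∣ n) (hr1 : 1 ≤ r) (hr2 : r < p)
    (μ : ℕ → ℕ) (hμ : IsPartition n μ)
    (h : ∃ a b, a + b = n ∧ 1 ≤ b ∧ b ≤ r ∧ Dominates μ (hookFn a b)) :
    ∃ a b, a + b = n ∧ 1 ≤ b ∧ b ≤ r ∧ PDominates p n μ (hookFn a b) := by
  obtain ⟨a0, b0, hab0, hb01, hb0r, hdom⟩ := h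
  have hp1 : 1 < p := hp.one_lt
  have hn0 : 0 < n := by omega
  have hμ0n : μ 0 ≤ n := part_le n μ hμ 0
  have hT : μ 0 + ∑ j ∈ Finset.Ico 1 n, μ j = n := tail_sum n μ hμ hn0
  have hμ0r : n - r ≤ μ 0 := by
    have hd := hdom 1
    rw [Finset.sum_range_one, Finset.sum_range_one] at hd
    have : hookFn a0 b0 0 = a0 := by simp [hookFn]
    rw [this] at hd
    omega
  rcases lt_or_eq_of_le hμ0n with hlt | heq
  · -- μ 0 < n
    have hμ1 : 1 ≤ μ 1 := by
      by_contra hcon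
      push_neg at hcon
      have hz : ∀ k ∈ Finset.Ico 1 n, μ k = 0 := by
        intro k hk
        rw [Finset.mem_Ico] at hk
        have := hμ.1 (show 1 ≤ k from hk.1)
        omega
      rw [Finset.sum_eq_zero hz] at hT
      omega
    have hs1 : 1 ≤ bpe p n μ 0 0 := by
      have htail' : ∑ j ∈ Finset.Ico 1 n, μ j < p := by omega
      have h1 : bpe p n μ 0 1 = μ 1 := bpe_zero_tail p n μ hp1 hμ htail' 1 le_rfl
      have h2 : bpe p n μ 0 1 ≤ bpe p n μ 0 0 :=
        Finset.sum_le_sum_of_subset (Finset.Ico_subset_Ico (Nat.zero_le 1) le_rfl)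
      omega
    have hkey := key_lemma p n hp hn μ hμ (n - μ 0) (bpe p n μ 0 0)
      (by omega) le_rfl (by omega) (by omega) (by omega) (Or.inl hs1)
    refine ⟨μ 0, n - μ 0, by omega, by omega, by omega, ?_⟩
    have e : n - (n - μ 0) = μ 0 := by omega
    rwa [e] at hkey
  · -- μ 0 = n
    have hzero : ∀ k, 1 ≤ k → μ k = 0 := by
      intro k hk
      rcases lt_or_ge k n with hkn | hkn
      · have h1 : ∑ j ∈ Finset.Ico 1 n, μ j = 0 := by omega
        rw [Finset.sum_eq_zero_iff] at h1
        exact h1 k (Finset.mem_Ico.mpr ⟨hk, hkn⟩)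
      · exact hμ.2.1 k hkn
    have hd : bpe p n μ 0 0 = n % p := by
      unfold bpe
      rw [Finset.sum_eq_single_of_mem 0 (Finset.mem_Ico.mpr ⟨le_rfl, hn0⟩)]
      · have h1 : μ 1 = 0 := hzero 1 le_rfl
        unfold dgt
        rw [h1, heq, Nat.sub_zero, pow_zero, Nat.div_one]
      · intro k _ hk0
        have h1 : μ k = 0 := hzero k (by omega)
        have h2 : μ (k + 1) = 0 := hzero (k + 1) (by omega)
        unfold dgt
        rw [h1, h2]
        simp
    have hd1 : 1 ≤ n % p := by
      rcases Nat.eq_zero_or_pos (n % p) with h0 | h0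
      · exact absurd (Nat.dvd_iff_mod_eq_zero.mpr h0) hpn
      · exact h0
    have hdp : n % p < p := Nat.mod_lt n (by omega)
    rcases eq_or_lt_of_le hd1 with h1 | h2
    · -- n % p = 1 : take b = 1, s = 0
      have hkey := key_lemma p n hp hn μ hμ 1 0
        le_rfl (by omega) (by omega) (by omega) (by omega) (Or.inr ⟨rfl, rfl, heq⟩)
      exact ⟨n - 1, 1, by omega, le_rfl, hr1, hkey⟩
    · -- n % p ≥ 2 : take b = min r (n % p - 1), s = n % p - b
      set b := min r (n % p - 1) with hb
      have hkey := key_lemma p n hp hn μ hμ b (n % p - b)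
        (by omega) (by omega) (by omega) (by omega) (by omega) (Or.inl (by omega))
      exact ⟨n - b, b, by omega, by omega, by omega, hkey⟩
end
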